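/- Let Φ be a pure balanced relative simplicial complex of dimension d with coloring κ, and let G be a group of automorphisms of Φ (color-preserving simplicial automorphisms). For S ⊆ T ⊆ [d+1], the permutation character of G acting on the faces with color set S is a subcharacter (as a G-representation) of the permutation character of G acting on faces with color set T. -/

import Mathlib

open LinearMap

noncomputable section

/-- Trace is additive over an invariant complementary pair of subspaces. -/
lemma trace_restrict_add_of_isCompl' {M : Type} [AddCommGroup M] [Module ℂ M]
    [FiniteDimensional ℂ M] {p q : Submodule ℂ M} (h : IsCompl p q)
    (φ : M →ₗ[ℂ] M) (hp : ∀ x ∈ p, φ x ∈ p) (hq : ∀ x ∈ q, φ x ∈ q) :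
    trace ℂ M φ =
      trace ℂ p (φ.restrict hp) + trace ℂ q (φ.restrict hq) := by
  let e := Submodule.prodEquivOfIsCompl p q h
  have key : φ = e.conj ((φ.restrict hp).prodMap (φ.restrict hq)) := by
    apply LinearMap.ext; intro y
    obtain ⟨x, rfl⟩ := e.surjective y
    rw [LinearEquiv.conj_apply]
    simp only [LinearMap.comp_apply, LinearEquiv.coe_coe, LinearEquiv.symm_apply_apply]
    obtain ⟨u, w⟩ := x
    have h1 : e (u, w) = (u : M) + (w : M) := rfl
    have h2 : e (φ.restrict hp u, φ.restrict hq w)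
        = (φ.restrict hp u : M) + (φ.restrict hq w : M) := rfl
    rw [h1, LinearMap.prodMap_apply, h2]
    simp [LinearMap.restrict_coe_apply, map_add]
  conv_lhs => rw [key]
  rw [trace_conj', trace_prodMap']

lemma trace_eq_of_linearEquiv' {M N : Type} [AddCommGroup M] [Module ℂ M]
    [AddCommGroup N] [Module ℂ N]
    (e : M ≃ₗ[ℂ] N) (φ : N →ₗ[ℂ] N) (ψ : M →ₗ[ℂ] M)
    (hcomm : ∀ v : M, φ (e v) = e (ψ v)) : trace ℂ N φ = trace ℂ M ψ := by
  have h : φ = e.conj ψ := by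
    apply LinearMap.ext; intro y
    obtain ⟨x, rfl⟩ := e.surjective y
    rw [LinearEquiv.conj_apply]
    simp only [LinearMap.comp_apply, LinearEquiv.coe_coe, LinearEquiv.symm_apply_apply]
    exact hcomm x
  rw [h, trace_conj']

lemma trace_funLeft' {α : Type} [Fintype α] [DecidableEq α] (t : α → α) :
    trace ℂ (α → ℂ) (LinearMap.funLeft ℂ ℂ t) =
      ((Finset.univ.filter fun a => t a = a).card : ℂ) := by
  rw [trace_eq_matrix_trace ℂ (Pi.basisFun ℂ α), LinearMap.toMatrix_eq_toMatrix', Matrix.trace]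
  rw [Finset.card_filter]
  push_cast
  refine Finset.sum_congr rfl fun a _ => ?_
  simp only [Matrix.diag_apply, LinearMap.toMatrix'_apply, LinearMap.funLeft_apply, Pi.single_apply]

end

/-- A complex-valued function on `G` is an effective character if it is the character
of some finite-dimensional complex representation of `G`. -/
def IsEffectiveChar (G : Type) [Group G] (χ : G → ℂ) : Prop :=
  ∃ W : FDRep ℂ G, ∀ g : G, χ g = W.character g

/-- Let `Φ` be a pure balanced relative simplicial complex of dimension `d` with
coloring `κ`, and let `G` act on the vertices by color-preserving automorphisms of
`Φ` (via `ρG : G →* Perm V`).  For color sets `S ⊆ T ⊆ [d+1]`, the permutation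
character of `G` acting on the faces with color set `S` is a subcharacter of the
permutation character of `G` on the faces with color set `T`: their difference is an
effective character.  (The permutation character assigns to `g` its number of fixed
faces.) -/
theorem perm_character_faces_subcharacter
    {V : Type} [Fintype V] [DecidableEq V] (d : ℕ)
    (Φ : Finset (Finset V)) (κ : V → Fin (d + 1))
    (hne : Φ.Nonempty)
    (hsandwich : ∀ ρ σ τ : Finset V, ρ ∈ Φ → τ ∈ Φ → ρ ⊆ σ → σ ⊆ τ → σ ∈ Φ)
    (hpure : ∀ ρ ∈ Φ, ∃ σ ∈ Φ, ρ ⊆ σ ∧ σ.card = d + 1)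
    (hbal : ∀ σ ∈ Φ, (σ.image κ).card = σ.card)
    (G : Type) [Group G] [Fintype G] (ρG : G →* Equiv.Perm V)
    (hκ : ∀ (g : G) (v : V), κ (ρG g v) = κ v)
    (hact : ∀ (g : G), ∀ σ ∈ Φ, σ.image (ρG g) ∈ Φ)
    (S T : Finset (Fin (d + 1))) (hST : S ⊆ T) :
    IsEffectiveChar G (fun g : G =>
      (Nat.card {τ : Finset V // τ ∈ Φ ∧ τ.image κ = T ∧ τ.image (ρG g) = τ} : ℂ)
        - (Nat.card {σ : Finset V // σ ∈ Φ ∧ σ.image κ = S ∧ σ.image (ρG g) = σ} : ℂ)) := by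
  classical
  -- basic facts about the action on faces
  have himgκ : ∀ (g : G) (σ : Finset V), (σ.image (ρG g)).image κ = σ.image κ := by
    intro g σ
    rw [Finset.image_image]
    congr 1
    funext v
    exact hκ g v
  have himg_comp : ∀ (g h : G) (σ : Finset V),
      (σ.image (ρG h)).image (ρG g) = σ.image (ρG (g * h)) := by
    intro g h σ
    rw [Finset.image_image]
    congr 1
    funext v
    simp [map_mul]
  have himg_one : ∀ σ : Finset V, σ.image (ρG 1) = σ := by
    intro σ
    have : (ρG (1 : G) : V → V) = id := by funext v; simp
    rw [this, Finset.image_id]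
  -- the face sets
  let X := {σ : Finset V // σ ∈ Φ ∧ σ.image κ = S}
  let Y := {τ : Finset V // τ ∈ Φ ∧ τ.image κ = T}
  let actX : G → X → X := fun g x =>
    ⟨x.1.image (ρG g), hact g x.1 x.2.1, by rw [himgκ]; exact x.2.2⟩
  let actY : G → Y → Y := fun g y =>
    ⟨y.1.image (ρG g), hact g y.1 y.2.1, by rw [himgκ]; exact y.2.2⟩
  have actX_one : ∀ x, actX 1 x = x := fun x => Subtype.ext (himg_one x.1)
  have actY_one : ∀ y, actY 1 y = y := fun y => Subtype.ext (himg_one y.1)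
  have actX_mul : ∀ g h x, actX (g * h) x = actX g (actX h x) :=
    fun g h x => Subtype.ext (himg_comp g h x.1).symm
  have actY_mul : ∀ g h y, actY (g * h) y = actY g (actY h y) :=
    fun g h y => Subtype.ext (himg_comp g h y.1).symm
  have actX_inv : ∀ g x, actX g (actX g⁻¹ x) = x := by
    intro g x; rw [← actX_mul, mul_inv_cancel, actX_one]
  have actX_inv' : ∀ g x, actX g⁻¹ (actX g x) = x := by
    intro g x; rw [← actX_mul, inv_mul_cancel, actX_one]
  have actY_inv : ∀ g y, actY g (actY g⁻¹ y) = y := by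
    intro g y; rw [← actY_mul, mul_inv_cancel, actY_one]
  have actY_inv' : ∀ g y, actY g⁻¹ (actY g y) = y := by
    intro g y; rw [← actY_mul, inv_mul_cancel, actY_one]
  -- the permutation representations
  let ρX : Representation ℂ G (X → ℂ) :=
    { toFun := fun g => LinearMap.funLeft ℂ ℂ (actX g⁻¹)
      map_one' := by
        apply LinearMap.ext; intro u; funext x
        simp [LinearMap.funLeft_apply, inv_one, actX_one]
      map_mul' := by
        intro g h
        apply LinearMap.ext; intro u; funext x
        simp only [LinearMap.funLeft_apply, Module.End.mul_apply]
        rw [mul_inv_rev, actX_mul] }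
  
  let ρY : Representation ℂ G (Y → ℂ) :=
    { toFun := fun g => LinearMap.funLeft ℂ ℂ (actY g⁻¹)
      map_one' := by
        apply LinearMap.ext; intro u; funext y
        simp [LinearMap.funLeft_apply, inv_one, actY_one]
      map_mul' := by
        intro g h
        apply LinearMap.ext; intro u; funext y
        simp only [LinearMap.funLeft_apply, Module.End.mul_apply]
        rw [mul_inv_rev, actY_mul] }
  have hρX_apply : ∀ (g : G) (u : X → ℂ) (x : X), ρX g u x = u (actX g⁻¹ x) := fun _ _ _ => rfl
  have hρY_apply : ∀ (g : G) (u : Y → ℂ) (y : Y), ρY g u y = u (actY g⁻¹ y) := fun _ _ _ => rfl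
  -- traces of the permutation representations count fixed points
  have htraceX : ∀ g : G, trace ℂ (X → ℂ) (ρX g) =
      ((Finset.univ.filter fun x : X => actX g x = x).card : ℂ) := by
    intro g
    rw [show (ρX g : (X → ℂ) →ₗ[ℂ] (X → ℂ)) = LinearMap.funLeft ℂ ℂ (actX g⁻¹) from rfl,
      trace_funLeft']
    congr 2
    apply Finset.filter_congr
    intro x _
    constructor
    · intro h; conv_lhs => rw [← h]
      exact actX_inv g x
    · intro h; conv_lhs => rw [← h]
      exact (actX_inv' g x)
  have htraceY : ∀ g : G, trace ℂ (Y → ℂ) (ρY g) =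
      ((Finset.univ.filter fun y : Y => actY g y = y).card : ℂ) := by
    intro g
    rw [show (ρY g : (Y → ℂ) →ₗ[ℂ] (Y → ℂ)) = LinearMap.funLeft ℂ ℂ (actY g⁻¹) from rfl,
      trace_funLeft']
    congr 2
    apply Finset.filter_congr
    intro y _
    constructor
    · intro h; conv_lhs => rw [← h]
      exact actY_inv g y
    · intro h; conv_lhs => rw [← h]
      exact (actY_inv' g y)
  -- counting fixed faces
  have hcountX : ∀ g : G,
      (Nat.card {σ : Finset V // σ ∈ Φ ∧ σ.image κ = S ∧ σ.image (ρG g) = σ} : ℕ) =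
      (Finset.univ.filter fun x : X => actX g x = x).card := by
    intro g
    rw [Nat.card_eq_fintype_card, ← Fintype.card_subtype]
    exact Fintype.card_congr
      { toFun := fun p => ⟨⟨p.1, p.2.1, p.2.2.1⟩, Subtype.ext p.2.2.2⟩
        invFun := fun q => ⟨q.1.1, q.1.2.1, q.1.2.2, congrArg Subtype.val q.2⟩
        left_inv := fun p => rfl
        right_inv := fun q => rfl }
  have hcountY : ∀ g : G,
      (Nat.card {τ : Finset V // τ ∈ Φ ∧ τ.image κ = T ∧ τ.image (ρG g) = τ} : ℕ) =
      (Finset.univ.filter fun y : Y => actY g y = y).card := by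
    intro g
    rw [Nat.card_eq_fintype_card, ← Fintype.card_subtype]
    exact Fintype.card_congr
      { toFun := fun p => ⟨⟨p.1, p.2.1, p.2.2.1⟩, Subtype.ext p.2.2.2⟩
        invFun := fun q => ⟨q.1.1, q.1.2.1, q.1.2.2, congrArg Subtype.val q.2⟩
        left_inv := fun p => rfl
        right_inv := fun q => rfl }
  -- a `T`-face contains at most one `S`-face
  have huniq : ∀ (y : Y) (x : X), x.1 ⊆ y.1 → x.1 = y.1.filter (fun v => κ v ∈ S) := by
    intro y x hxy
    have hinj : Set.InjOn κ (y.1 : Set V) :=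
      Finset.injOn_of_card_image_eq (hbal y.1 y.2.1)
    apply Finset.Subset.antisymm
    · intro v hv
      refine Finset.mem_filter.mpr ⟨hxy hv, ?_⟩
      rw [← x.2.2]
      exact Finset.mem_image_of_mem κ hv
    · intro v hv
      obtain ⟨hvy, hvS⟩ := Finset.mem_filter.mp hv
      rw [← x.2.2] at hvS
      obtain ⟨w, hwx, hwv⟩ := Finset.mem_image.mp hvS
      have : w = v := hinj (hxy hwx) hvy hwv
      rwa [← this]
  have huniq' : ∀ (y : Y) (x x' : X), x.1 ⊆ y.1 → x'.1 ⊆ y.1 → x = x' := by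
    intro y x x' h h'
    exact Subtype.ext ((huniq y x h).trans (huniq y x' h').symm)
  -- every `S`-face is contained in some `T`-face
  have hexists : ∀ x : X, ∃ y : Y, x.1 ⊆ y.1 := by
    intro x
    obtain ⟨F, hF, hsub, hcard⟩ := hpure x.1 x.2.1
    have hFuniv : F.image κ = Finset.univ := by
      apply Finset.eq_univ_of_card
      rw [hbal F hF, hcard, Fintype.card_fin]
    have hxT : x.1 ⊆ F.filter (fun v => κ v ∈ T) := by
      intro v hv
      refine Finset.mem_filter.mpr ⟨hsub hv, hST ?_⟩
      rw [← x.2.2]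
      exact Finset.mem_image_of_mem κ hv
    refine ⟨⟨F.filter (fun v => κ v ∈ T), ?_, ?_⟩, hxT⟩
    · exact hsandwich x.1 _ F x.2.1 hF hxT (Finset.filter_subset _ _)
    · apply Finset.Subset.antisymm
      · intro t ht
        obtain ⟨v, hv, rfl⟩ := Finset.mem_image.mp ht
        exact (Finset.mem_filter.mp hv).2
      · intro t ht
        have : t ∈ F.image κ := by rw [hFuniv]; exact Finset.mem_univ t
        obtain ⟨v, hv, rfl⟩ := Finset.mem_image.mp this
        exact Finset.mem_image_of_mem κ (Finset.mem_filter.mpr ⟨hv, ht⟩)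
  -- the equivariant injection of permutation modules
  let F : (X → ℂ) →ₗ[ℂ] (Y → ℂ) :=
    { toFun := fun u y => ∑ x ∈ Finset.univ.filter (fun x : X => x.1 ⊆ y.1), u x
      map_add' := by
        intro u v; funext y
        simp [Finset.sum_add_distrib]
      map_smul' := by
        intro c u; funext y
        simp [Finset.mul_sum] }
  have hFdef : ∀ (u : X → ℂ) (y : Y),
      F u y = ∑ x ∈ Finset.univ.filter (fun x : X => x.1 ⊆ y.1), u x := fun _ _ => rfl
  have hFinj : Function.Injective F := by
    rw [injective_iff_map_eq_zero]
    intro u hu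
    funext x
    obtain ⟨y, hxy⟩ := hexists x
    have h0 : F u y = 0 := by rw [hu]; rfl
    rw [hFdef] at h0
    rw [Finset.sum_eq_single_of_mem x (Finset.mem_filter.mpr ⟨Finset.mem_univ x, hxy⟩)] at h0
    · exact h0
    · intro b hb hbx
      exact absurd (huniq' y b x (Finset.mem_filter.mp hb).2 hxy) hbx
  have hsub_iff : ∀ (g : G) (x : X) (y : Y), (actX g x).1 ⊆ (actY g y).1 ↔ x.1 ⊆ y.1 := by
    intro g x y
    constructor
    · intro h v hv
      have := h (Finset.mem_image_of_mem (ρG g) hv)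
      obtain ⟨w, hw, hwv⟩ := Finset.mem_image.mp this
      rwa [← (ρG g).injective hwv]
    · intro h
      exact Finset.image_subset_image h
  have hFequiv : ∀ (g : G) (u : X → ℂ), F (ρX g u) = ρY g (F u) := by
    intro g u
    funext y
    rw [hρY_apply, hFdef, hFdef]
    refine Finset.sum_nbij' (fun x => actX g⁻¹ x) (fun x => actX g x) ?_ ?_ ?_ ?_ ?_
    · intro x hx
      refine Finset.mem_filter.mpr ⟨Finset.mem_univ _, ?_⟩
      have := (Finset.mem_filter.mp hx).2
      rw [← hsub_iff g⁻¹] at this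
      exact this
    · intro x hx
      refine Finset.mem_filter.mpr ⟨Finset.mem_univ _, ?_⟩
      have := (Finset.mem_filter.mp hx).2
      rw [← hsub_iff g] at this
      rwa [actY_inv] at this
    · intro x _; exact actX_inv g x
    · intro x _; exact actX_inv' g x
    · intro x _; rw [hρX_apply]
  -- a linear retraction, averaged to be equivariant
  obtain ⟨π0, hπ0⟩ := F.exists_leftInverse_of_injective (LinearMap.ker_eq_bot.mpr hFinj)
  let π : (Y → ℂ) →ₗ[ℂ] (X → ℂ) :=
    (Fintype.card G : ℂ)⁻¹ • ∑ g : G, (ρX g⁻¹ ∘ₗ π0 ∘ₗ ρY g)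
  have hcardG : (Fintype.card G : ℂ) ≠ 0 := by
    exact_mod_cast Fintype.card_ne_zero
  have hπ0F : ∀ u : X → ℂ, π0 (F u) = u := by
    intro u
    rw [← LinearMap.comp_apply, hπ0, LinearMap.id_apply]
  have hπF : ∀ u : X → ℂ, π (F u) = u := by
    intro u
    have key : ∀ g : G, (ρX g⁻¹ ∘ₗ π0 ∘ₗ ρY g) (F u) = u := by
      intro g
      simp only [LinearMap.comp_apply]
      rw [← hFequiv, hπ0F, ← Module.End.mul_apply, ← map_mul, inv_mul_cancel, map_one,
        Module.End.one_apply]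
    simp only [π, LinearMap.smul_apply, LinearMap.sum_apply]
    rw [Finset.sum_congr rfl (fun g _ => key g), Finset.sum_const, Finset.card_univ]
    rw [← Nat.cast_smul_eq_nsmul ℂ, smul_smul, inv_mul_cancel₀ hcardG, one_smul]
  have hπequiv : ∀ (h : G) (u : Y → ℂ), π (ρY h u) = ρX h (π u) := by
    intro h u
    have main : ∀ g : G, (ρX g⁻¹ ∘ₗ π0 ∘ₗ ρY g) (ρY h u)
        = ρX h ((ρX (g * h)⁻¹ ∘ₗ π0 ∘ₗ ρY (g * h)) u) := by
      intro g
      simp only [LinearMap.comp_apply]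
      rw [← Module.End.mul_apply (ρY g) (ρY h), ← map_mul]
      rw [← Module.End.mul_apply (ρX h), ← map_mul]
      have : h * (g * h)⁻¹ = g⁻¹ := by group
      rw [this]
    simp only [π, LinearMap.smul_apply, LinearMap.sum_apply]
    rw [map_smul, map_sum]
    congr 1
    rw [Finset.sum_congr rfl (fun g _ => main g)]
    exact Fintype.sum_bijective (· * h) (Group.mulRight_bijective h) _ _ (fun g => rfl)
  -- the complementary invariant subspace
  let p : Submodule ℂ (Y → ℂ) := LinearMap.range F
  let q : Submodule ℂ (Y → ℂ) := LinearMap.ker π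
  have hcompl : IsCompl p q := by
    constructor
    · rw [disjoint_iff_inf_le]
      intro x hx
      obtain ⟨hxp, hxq⟩ := Submodule.mem_inf.mp hx
      obtain ⟨u, rfl⟩ := hxp
      have h0 : π (F u) = 0 := LinearMap.mem_ker.mp hxq
      rw [hπF] at h0
      rw [Submodule.mem_bot, h0, map_zero]
    · rw [codisjoint_iff, eq_top_iff]
      intro x _
      refine Submodule.mem_sup.mpr ⟨F (π x), ⟨π x, rfl⟩, x - F (π x), ?_, by ring⟩
      rw [LinearMap.mem_ker, map_sub, hπF, sub_self]
  have hpinv : ∀ g : G, ∀ x ∈ p, ρY g x ∈ p := by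
    rintro g _ ⟨u, rfl⟩
    exact ⟨ρX g u, hFequiv g u⟩
  have hqinv : ∀ g : G, ∀ x ∈ q, ρY g x ∈ q := by
    intro g x hx
    have hx' : π x = 0 := LinearMap.mem_ker.mp hx
    exact LinearMap.mem_ker.mpr (by rw [hπequiv, hx', map_zero])
  let ρQ : Representation ℂ G q :=
    { toFun := fun g => (ρY g).restrict (hqinv g)
      map_one' := by
        apply LinearMap.ext; intro x
        apply Subtype.ext
        rw [LinearMap.restrict_coe_apply]
        simp
      map_mul' := by
        intro g h
        apply LinearMap.ext; intro x
        apply Subtype.ext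
        simp [Module.End.mul_apply, LinearMap.restrict_coe_apply, map_mul] }
  refine ⟨FDRep.of ρQ, fun g => ?_⟩
  dsimp only
  have hchar : (FDRep.of ρQ).character g = trace ℂ q (ρQ g) := rfl
  have hdecomp : trace ℂ (Y → ℂ) (ρY g)
      = trace ℂ p ((ρY g).restrict (hpinv g)) + trace ℂ q (ρQ g) :=
    trace_restrict_add_of_isCompl' hcompl (ρY g) (hpinv g) (hqinv g)
  have htrp : trace ℂ p ((ρY g).restrict (hpinv g)) = trace ℂ (X → ℂ) (ρX g) := by
    refine trace_eq_of_linearEquiv' (LinearEquiv.ofInjective F hFinj) _ _ ?_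
    intro v
    apply Subtype.ext
    rw [LinearMap.restrict_coe_apply]
    simp only [LinearEquiv.ofInjective_apply]
    rw [← hFequiv]
  have e1 : ((Nat.card {τ : Finset V // τ ∈ Φ ∧ τ.image κ = T ∧ τ.image (ρG g) = τ} : ℕ) : ℂ)
      = trace ℂ (Y → ℂ) (ρY g) := by
    rw [congrArg (Nat.cast : ℕ → ℂ) (hcountY g), ← htraceY g]
  have e2 : ((Nat.card {σ : Finset V // σ ∈ Φ ∧ σ.image κ = S ∧ σ.image (ρG g) = σ} : ℕ) : ℂ)
      = trace ℂ (X → ℂ) (ρX g) := by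
    rw [congrArg (Nat.cast : ℕ → ℂ) (hcountX g), ← htraceX g]
  rw [e1, e2, hdecomp, htrp, hchar]
  ring
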